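/- arXiv:2405.04951 — 3 statements merged into one kernel-verified Lean document; each statement's English description precedes it below -/
import Mathlib

section
/- For every real m > 0 and every x ≥ 0, the function φ_m defined by φ_m(x) = e^{-x} ∑_{j=0}^∞ (x^j/j!) ψ(j+m), where ψ is the digamma function, satisfies φ_m(x) = ψ(m) + ∫_0^1 (1 - e^{-xs})(1-s)^{m-1}/s ds. -/
open Real MeasureTheory Filter ProbabilityTheory

/-- The digamma function psi(x) = Gamma'(x)/Gamma(x). -/
noncomputable def psi (x : ℝ) : ℝ := deriv Real.Gamma x / Real.Gamma x

/-- phi_m(x) = e^{-x} * sum_j (x^j/j!) psi(j+m). -/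
noncomputable def phi (m x : ℝ) : ℝ :=
  Real.exp (-x) * ∑' j : ℕ, x ^ j / (Nat.factorial j : ℝ) * psi (j + m)

lemma psi_add_one {x : ℝ} (hx : 0 < x) : psi (x + 1) = psi x + 1 / x := by
  have hd : DifferentiableAt ℝ Real.Gamma x :=
    Real.differentiableAt_Gamma (fun n => ne_of_gt (lt_of_le_of_lt (neg_nonpos.mpr (Nat.cast_nonneg n)) hx))
  have hΓ := Real.Gamma_pos_of_pos hx
  have hΓ1 := Real.Gamma_pos_of_pos (by linarith : (0:ℝ) < x + 1)
  have hev : (fun y => Real.Gamma (y + 1)) =ᶠ[nhds x] (fun y => y * Real.Gamma y) := by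
    filter_upwards [eventually_gt_nhds hx] with y hy
    exact Real.Gamma_add_one hy.ne'
  have h1 : deriv Real.Gamma (x + 1) = deriv (fun y => Real.Gamma (y + 1)) x := by
    rw [deriv_comp_add_const]
  have h2 : deriv (fun y => y * Real.Gamma y) x
      = Real.Gamma x + x * deriv Real.Gamma x := by
    rw [deriv_fun_mul differentiableAt_fun_id hd]; simp
  have h3 : deriv Real.Gamma (x + 1) = Real.Gamma x + x * deriv Real.Gamma x := by
    rw [h1, hev.deriv_eq, h2]
  unfold psi
  rw [h3, Real.Gamma_add_one hx.ne']
  field_simp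
  ring

lemma psi_nat_add {m : ℝ} (hm : 0 < m) (j : ℕ) :
    psi (j + m) = psi m + ∑ k ∈ Finset.range j, 1 / (m + k) := by
  induction j with
  | zero => simp
  | succ n ih =>
    have h : ((n + 1 : ℕ) : ℝ) + m = ((n : ℝ) + m) + 1 := by push_cast; ring
    have hnm : (0:ℝ) < (n : ℝ) + m := by positivity
    rw [h, psi_add_one hnm, ih, Finset.sum_range_succ]
    rw [add_comm (n:ℝ) m]; ring

lemma intInt_rpow {c : ℝ} (hc : -1 < c) :
    IntervalIntegrable (fun s : ℝ => (1 - s) ^ c) volume 0 1 := by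
  have := (intervalIntegral.intervalIntegrable_rpow' hc (a := 0) (b := 1)).comp_sub_left 1
  simpa using this.symm

lemma integral_one_sub_rpow {c : ℝ} (hc : -1 < c) :
    ∫ s in (0:ℝ)..1, (1 - s) ^ c = 1 / (c + 1) := by
  have h := intervalIntegral.integral_comp_sub_left (a := (0:ℝ)) (b := 1)
    (fun u : ℝ => u ^ c) 1
  simp only [sub_self, sub_zero] at h
  rw [h, integral_rpow (Or.inl hc), Real.one_rpow, Real.zero_rpow (by linarith : c + 1 ≠ 0)]
  ring

lemma integral_Hj {m : ℝ} (hm : 0 < m) (j : ℕ) :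
    ∫ s in (0:ℝ)..1, (1 - (1 - s) ^ j) * (1 - s) ^ (m - 1) / s
      = ∑ k ∈ Finset.range j, 1 / (m + k) := by
  have hc : ∀ k : ℕ, (-1:ℝ) < m - 1 + k := fun k => by
    have := Nat.cast_nonneg (α := ℝ) k; linarith
  have key : ∫ s in (0:ℝ)..1, (1 - (1 - s) ^ j) * (1 - s) ^ (m - 1) / s
      = ∫ s in (0:ℝ)..1, ∑ k ∈ Finset.range j, (1 - s) ^ (m - 1 + (k:ℝ)) := by
    apply intervalIntegral.integral_congr_ae
    have h1 : ∀ᵐ s : ℝ, s ∉ ({1} : Set ℝ) :=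
      measure_eq_zero_iff_ae_notMem.mp (by simp)
    filter_upwards [h1] with s hs1 hmem
    rw [Set.uIoc_of_le (by norm_num : (0:ℝ) ≤ 1)] at hmem
    have hs0 : 0 < s := hmem.1
    have hslt : s < 1 := lt_of_le_of_ne hmem.2 (by simpa using hs1)
    have ht0 : 0 < 1 - s := by linarith
    have ht1 : (1 - s : ℝ) ≠ 1 := by intro h; simp at h; linarith [hs0, h]
    have hgeom : ∑ k ∈ Finset.range j, (1 - s) ^ k = (1 - (1 - s) ^ j) / s := by
      rw [geom_sum_eq ht1, show (1 - s) - 1 = -s by ring, div_neg, ← neg_div, neg_sub]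
    calc (1 - (1 - s) ^ j) * (1 - s) ^ (m - 1) / s
        = (1 - s) ^ (m - 1) * ((1 - (1 - s) ^ j) / s) := by ring
      _ = (1 - s) ^ (m - 1) * ∑ k ∈ Finset.range j, (1 - s) ^ k := by rw [hgeom]
      _ = ∑ k ∈ Finset.range j, (1 - s) ^ (m - 1 + (k:ℝ)) := by
          rw [Finset.mul_sum]
          refine Finset.sum_congr rfl fun k _ => ?_
          rw [Real.rpow_add ht0, Real.rpow_natCast]
  rw [key, intervalIntegral.integral_finset_sum (fun k _ => intInt_rpow (hc k))]
  refine Finset.sum_congr rfl fun k _ => ?_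
  rw [integral_one_sub_rpow (hc k), show m - 1 + (k:ℝ) + 1 = m + k by ring]

lemma tsum_exp (y : ℝ) : ∑' j : ℕ, y ^ j / (Nat.factorial j : ℝ) = Real.exp y := by
  rw [Real.exp_eq_exp_ℝ, NormedSpace.exp_eq_tsum_div]

lemma summable_j_pow (x : ℝ) : Summable (fun j : ℕ => (j:ℝ) * x ^ j / (Nat.factorial j : ℝ)) := by
  apply (summable_nat_add_iff 1).mp
  have h : (fun n : ℕ => ((n + 1 : ℕ):ℝ) * x ^ (n + 1) / (Nat.factorial (n + 1) : ℝ))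
      = fun n : ℕ => x * (x ^ n / (Nat.factorial n : ℝ)) := by
    funext n
    rw [Nat.factorial_succ]
    have h1 : ((n:ℝ) + 1) ≠ 0 := by positivity
    have h2 : ((Nat.factorial n : ℕ) : ℝ) ≠ 0 := by positivity
    push_cast
    field_simp
    ring
  rw [h]
  exact (Real.summable_pow_div_factorial x).mul_left x

lemma sum_inv_le {m : ℝ} (hm : 0 < m) (j : ℕ) :
    ∑ k ∈ Finset.range j, 1 / (m + k) ≤ j / m := by
  calc ∑ k ∈ Finset.range j, 1 / (m + k) ≤ ∑ k ∈ Finset.range j, 1 / m := by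
        refine Finset.sum_le_sum fun k _ => ?_
        apply one_div_le_one_div_of_le hm
        have := Nat.cast_nonneg (α := ℝ) k; linarith
    _ = j / m := by rw [Finset.sum_const, Finset.card_range, nsmul_eq_mul]; ring

lemma sum_inv_nonneg {m : ℝ} (hm : 0 < m) (j : ℕ) :
    0 ≤ ∑ k ∈ Finset.range j, 1 / (m + k) :=
  Finset.sum_nonneg fun k _ => by positivity

lemma summable_H {m x : ℝ} (hm : 0 < m) (hx : 0 ≤ x) :
    Summable (fun j : ℕ => x ^ j / (Nat.factorial j : ℝ) * ∑ k ∈ Finset.range j, 1 / (m + k)) := by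
  apply Summable.of_nonneg_of_le
    (fun j => by positivity)
    (fun j => ?_) (((summable_j_pow x).mul_left (1 / m)))
  calc x ^ j / (Nat.factorial j : ℝ) * ∑ k ∈ Finset.range j, 1 / (m + k)
      ≤ x ^ j / (Nat.factorial j : ℝ) * ((j:ℝ) / m) := by
        apply mul_le_mul_of_nonneg_left (sum_inv_le hm j) (by positivity)
    _ = 1 / m * ((j:ℝ) * x ^ j / (Nat.factorial j : ℝ)) := by ring

lemma phi_eq {m x : ℝ} (hm : 0 < m) (hx : 0 ≤ x) :
    phi m x = psi m + Real.exp (-x) *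
      ∑' j : ℕ, x ^ j / (Nat.factorial j : ℝ) * ∑ k ∈ Finset.range j, 1 / (m + k) := by
  unfold phi
  have h1 : ∀ j : ℕ, x ^ j / (Nat.factorial j : ℝ) * psi (j + m)
      = x ^ j / (Nat.factorial j : ℝ) * psi m
        + x ^ j / (Nat.factorial j : ℝ) * ∑ k ∈ Finset.range j, 1 / (m + k) := fun j => by
    rw [psi_nat_add hm j]; ring
  rw [tsum_congr h1,
    Summable.tsum_add ((Real.summable_pow_div_factorial x).mul_right (psi m)) (summable_H hm hx),
    tsum_mul_right, tsum_exp, mul_add, ← mul_assoc, ← Real.exp_add, neg_add_cancel,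
    Real.exp_zero, one_mul]

lemma base_nonneg {m : ℝ} (j : ℕ) {s : ℝ} (hs : s ∈ Set.Ioc (0:ℝ) 1) :
    0 ≤ (1 - (1 - s) ^ j) * (1 - s) ^ (m - 1) / s := by
  obtain ⟨hs0, hs1⟩ := hs
  have ht0 : (0:ℝ) ≤ 1 - s := by linarith
  have h1 : (1 - s) ^ j ≤ 1 := pow_le_one₀ ht0 (by linarith)
  have h2 : (0:ℝ) ≤ (1 - s) ^ (m - 1) := Real.rpow_nonneg ht0 _
  exact div_nonneg (mul_nonneg (by linarith) h2) hs0.le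

lemma base_le {m : ℝ} (j : ℕ) {s : ℝ} (hs : s ∈ Set.Ioc (0:ℝ) 1) :
    (1 - (1 - s) ^ j) * (1 - s) ^ (m - 1) / s ≤ (j:ℝ) * (1 - s) ^ (m - 1) := by
  obtain ⟨hs0, hs1⟩ := hs
  have ht0 : (0:ℝ) ≤ 1 - s := by linarith
  have h2 : (0:ℝ) ≤ (1 - s) ^ (m - 1) := Real.rpow_nonneg ht0 _
  have hb : 1 - (1 - s) ^ j ≤ (j:ℝ) * s := by
    have h := one_add_mul_le_pow (a := -s) (by linarith) j
    have h' : 1 + (j:ℝ) * (-s) ≤ (1 - s) ^ j := by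
      rw [show (1 : ℝ) + -s = 1 - s by ring] at h; exact h
    linarith
  calc (1 - (1 - s) ^ j) * (1 - s) ^ (m - 1) / s
      ≤ ((j:ℝ) * s) * (1 - s) ^ (m - 1) / s := by gcongr
    _ = (j:ℝ) * (1 - s) ^ (m - 1) := by field_simp

lemma integrable_bound {m : ℝ} (hm : 0 < m) :
    IntegrableOn (fun s : ℝ => (1 - s) ^ (m - 1)) (Set.Ioc 0 1) volume := by
  have h := intInt_rpow (show (-1:ℝ) < m - 1 by linarith)
  rwa [intervalIntegrable_iff_integrableOn_Ioc_of_le (by norm_num)] at h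

lemma meas_base {m : ℝ} (j : ℕ) :
    Measurable (fun s : ℝ => (1 - (1 - s) ^ j) * (1 - s) ^ (m - 1) / s) := by
  have m1 : Measurable fun s : ℝ => (1 - (1 - s) ^ j) :=
    measurable_const.sub ((measurable_const.sub measurable_id).pow_const j)
  have m2 : Measurable fun s : ℝ => (1 - s) ^ (m - 1) := by fun_prop
  exact (m1.mul m2).div measurable_id

lemma integrableOn_base {m : ℝ} (hm : 0 < m) (j : ℕ) :
    IntegrableOn (fun s : ℝ => (1 - (1 - s) ^ j) * (1 - s) ^ (m - 1) / s)
      (Set.Ioc 0 1) volume := by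
  apply Integrable.mono' ((integrable_bound hm).const_mul (j:ℝ))
    (meas_base j).aestronglyMeasurable
  rw [ae_restrict_iff' measurableSet_Ioc]
  refine ae_of_all _ fun s hs => ?_
  rw [Real.norm_eq_abs, abs_of_nonneg (base_nonneg j hs)]
  exact base_le j hs

lemma integral_base {m : ℝ} (hm : 0 < m) (j : ℕ) :
    ∫ s in Set.Ioc (0:ℝ) 1, (1 - (1 - s) ^ j) * (1 - s) ^ (m - 1) / s
      = ∑ k ∈ Finset.range j, 1 / (m + k) := by
  rw [← intervalIntegral.integral_of_le (by norm_num : (0:ℝ) ≤ 1)]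
  exact integral_Hj hm j

lemma tsum_F {m x : ℝ} {s : ℝ} (hs0 : 0 < s) :
    ∑' j : ℕ, Real.exp (-x) * (x ^ j / (Nat.factorial j : ℝ))
        * ((1 - (1 - s) ^ j) * (1 - s) ^ (m - 1) / s)
      = (1 - Real.exp (-(x * s))) * (1 - s) ^ (m - 1) / s := by
  set K := (1 - s) ^ (m - 1) with hK
  have hsum1 : Summable fun j : ℕ =>
      (K / s) * (Real.exp (-x) * (x ^ j / (Nat.factorial j : ℝ))) :=
    ((Real.summable_pow_div_factorial x).mul_left _).mul_left _
  have hsum2 : Summable fun j : ℕ =>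
      (K / s) * (Real.exp (-x) * ((x * (1 - s)) ^ j / (Nat.factorial j : ℝ))) :=
    ((Real.summable_pow_div_factorial (x * (1 - s))).mul_left _).mul_left _
  have hcong : ∀ j : ℕ, Real.exp (-x) * (x ^ j / (Nat.factorial j : ℝ))
        * ((1 - (1 - s) ^ j) * K / s)
      = (K / s) * (Real.exp (-x) * (x ^ j / (Nat.factorial j : ℝ)))
        - (K / s) * (Real.exp (-x) * ((x * (1 - s)) ^ j / (Nat.factorial j : ℝ))) := fun j => by
    rw [mul_pow]; ring
  rw [tsum_congr hcong, Summable.tsum_sub hsum1 hsum2]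
  simp only [tsum_mul_left]
  rw [tsum_exp, tsum_exp, ← Real.exp_add, ← Real.exp_add, neg_add_cancel, Real.exp_zero,
    show -x + x * (1 - s) = -(x * s) by ring]
  ring

theorem stmt0 (m : ℝ) (hm : 0 < m) (x : ℝ) (hx : 0 ≤ x) :
    phi m x = psi m + ∫ s in (0:ℝ)..1, (1 - Real.exp (-(x * s))) * (1 - s) ^ (m - 1) / s := by
  rw [phi_eq hm hx, intervalIntegral.integral_of_le (by norm_num : (0:ℝ) ≤ 1)]
  congr 1
  set F : ℕ → ℝ → ℝ := fun j s => Real.exp (-x) * (x ^ j / (Nat.factorial j : ℝ))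
    * ((1 - (1 - s) ^ j) * (1 - s) ^ (m - 1) / s) with hF
  have hFint : ∀ j : ℕ, Integrable (F j) (volume.restrict (Set.Ioc (0:ℝ) 1)) := fun j =>
    (integrableOn_base hm j).const_mul _
  set I0 : ℝ := ∫ s in Set.Ioc (0:ℝ) 1, (1 - s) ^ (m - 1) with hI0
  have hnorm : Summable fun j : ℕ => ∫ s in Set.Ioc (0:ℝ) 1, ‖F j s‖ := by
    apply Summable.of_nonneg_of_le
      (fun j => integral_nonneg fun s => norm_nonneg _) (fun j => ?_)
      ((summable_j_pow x).mul_left (Real.exp (-x) * I0))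
    calc ∫ s in Set.Ioc (0:ℝ) 1, ‖F j s‖
        ≤ ∫ s in Set.Ioc (0:ℝ) 1,
            (Real.exp (-x) * (x ^ j / (Nat.factorial j : ℝ)) * j) * (1 - s) ^ (m - 1) := by
          apply integral_mono_ae (hFint j).norm
            ((integrable_bound hm).const_mul _)
          filter_upwards [self_mem_ae_restrict measurableSet_Ioc] with s hs
          have hc : 0 ≤ Real.exp (-x) * (x ^ j / (Nat.factorial j : ℝ)) := by positivity
          rw [hF, Real.norm_eq_abs, abs_of_nonneg (mul_nonneg hc (base_nonneg j hs))]
          calc rexp (-x) * (x ^ j / (Nat.factorial j : ℝ))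
                * ((1 - (1 - s) ^ j) * (1 - s) ^ (m - 1) / s)
              ≤ rexp (-x) * (x ^ j / (Nat.factorial j : ℝ)) * ((j:ℝ) * (1 - s) ^ (m - 1)) :=
                mul_le_mul_of_nonneg_left (base_le j hs) hc
            _ = rexp (-x) * (x ^ j / (Nat.factorial j : ℝ)) * (j:ℝ) * (1 - s) ^ (m - 1) := by
                ring
      _ = Real.exp (-x) * I0 * ((j:ℝ) * x ^ j / (Nat.factorial j : ℝ)) := by
          rw [MeasureTheory.integral_const_mul]; ring
  have hswap := MeasureTheory.integral_tsum_of_summable_integral_norm hFint hnorm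
  have hleft : ∑' j : ℕ, ∫ s in Set.Ioc (0:ℝ) 1, F j s
      = Real.exp (-x) * ∑' j : ℕ, x ^ j / (Nat.factorial j : ℝ)
          * ∑ k ∈ Finset.range j, 1 / (m + k) := by
    rw [← tsum_mul_left]
    refine tsum_congr fun j => ?_
    rw [hF]
    rw [MeasureTheory.integral_const_mul, integral_base hm j]
    ring
  rw [← hleft, hswap]
  refine setIntegral_congr_fun measurableSet_Ioc fun s hs => ?_
  exact tsum_F hs.1
end

section
/- For every real m > 0 and every x ≥ 0, the derivative of φ_m satisfies φ_m'(x) = e^{-x} ∑_{j=0}^∞ x^j/(j!(m+j)); equivalently φ_m'(x) = E[1/(m+ξ)] where ξ is a Poisson random variable with mean x. -/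
open Real MeasureTheory Filter ProbabilityTheory

lemma psi_rec {y : ℝ} (hy : 0 < y) : psi (y + 1) = psi y + 1 / y := by
  have hne : ∀ n : ℕ, y ≠ -n := fun n => by nlinarith [Nat.cast_nonneg (α := ℝ) n]
  have hd : DifferentiableAt ℝ Real.Gamma y := Real.differentiableAt_Gamma hne
  have h1 : HasDerivAt (fun t => Real.Gamma (t + 1)) (deriv Real.Gamma (y + 1)) y := by
    have hne' : ∀ n : ℕ, y + 1 ≠ -n := fun n => by nlinarith [Nat.cast_nonneg (α := ℝ) n]
    have := (Real.differentiableAt_Gamma hne').hasDerivAt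
    simpa [Function.comp_def] using this.comp y ((hasDerivAt_id y).add_const 1)
  have h2 : HasDerivAt (fun t => t * Real.Gamma t) (Real.Gamma y + y * deriv Real.Gamma y) y := by
    have := (hasDerivAt_id' y).mul hd.hasDerivAt
    simpa [Pi.mul_def] using this
  have heq : (fun t => Real.Gamma (t + 1)) =ᶠ[nhds y] (fun t => t * Real.Gamma t) := by
    filter_upwards [eventually_ne_nhds hy.ne'] with t ht
    exact Real.Gamma_add_one ht
  have h1' : HasDerivAt (fun t => t * Real.Gamma t) (deriv Real.Gamma (y + 1)) y :=
    h1.congr_of_eventuallyEq heq.symm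
  have key : deriv Real.Gamma (y + 1) = Real.Gamma y + y * deriv Real.Gamma y :=
    h1'.unique h2
  have hG : Real.Gamma y ≠ 0 := (Real.Gamma_pos_of_pos hy).ne'
  unfold psi
  rw [key, Real.Gamma_add_one hy.ne']
  field_simp
  ring

lemma psi_bound' (m : ℝ) (hm : 0 < m) (P : ℝ → ℝ)
    (hrec : ∀ y : ℝ, 0 < y → P (y + 1) = P y + 1 / y) (j : ℕ) :
    |P (j + m)| ≤ |P m| + j / m := by
  induction j with
  | zero => simp
  | succ n ih =>
    have hpos : (0:ℝ) < n + m := by positivity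
    have : P ((n:ℝ) + 1 + m) = P ((n:ℝ) + m) + 1 / ((n:ℝ) + m) := by
      have := hrec ((n:ℝ) + m) hpos
      rw [← this]; ring_nf
    push_cast
    rw [this]
    have h1 : |P ((n:ℝ) + m) + 1 / ((n:ℝ) + m)| ≤ |P ((n:ℝ) + m)| + |1 / ((n:ℝ) + m)| :=
      abs_add_le _ _
    have h2 : |1 / ((n:ℝ) + m)| ≤ 1 / m := by
      rw [abs_of_pos (by positivity)]
      gcongr; · linarith
    calc |P ((n:ℝ) + m) + 1 / ((n:ℝ) + m)| ≤ (|P m| + n / m) + 1 / m := by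
          refine h1.trans (add_le_add ih h2)
      _ = |P m| + ((n:ℝ) + 1) / m := by field_simp; ring

lemma summable_mul_pow_div_factorial (R : ℝ) :
    Summable (fun j : ℕ => (j : ℝ) * R ^ j / (Nat.factorial j : ℝ)) := by
  rw [← summable_nat_add_iff 1]
  have : (fun j : ℕ => ((j + 1 : ℕ) : ℝ) * R ^ (j + 1) / (Nat.factorial (j+1) : ℝ))
      = fun j : ℕ => R * (R ^ j / (Nat.factorial j : ℝ)) := by
    funext j
    rw [Nat.factorial_succ]
    push_cast
    have : ((j:ℝ) + 1) ≠ 0 := by positivity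
    field_simp
    ring
  rw [this]
  exact (Real.summable_pow_div_factorial R).mul_left R

lemma summable_affine (C D R : ℝ) :
    Summable (fun j : ℕ => (C + D * j) * R ^ j / (Nat.factorial j : ℝ)) := by
  have : (fun j : ℕ => (C + D * j) * R ^ j / (Nat.factorial j : ℝ))
      = fun j : ℕ => C * (R ^ j / (Nat.factorial j : ℝ)) + D * ((j:ℝ) * R ^ j / (Nat.factorial j : ℝ)) := by
    funext j; field_simp
  rw [this]
  exact ((Real.summable_pow_div_factorial R).mul_left C).add
    ((summable_mul_pow_div_factorial R).mul_left D)

theorem stmt1 (m : ℝ) (hm : 0 < m) (x : ℝ) (hx : 0 ≤ x) :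
    deriv (phi m) x = Real.exp (-x) * ∑' j : ℕ, x ^ j / ((Nat.factorial j : ℝ) * (m + j)) ∧
    deriv (phi m) x = ∑' j : ℕ, poissonPMFReal ⟨x, hx⟩ j * (1 / (m + j)) := by
  set C : ℝ := |psi m| with hC
  set R : ℝ := |x| + 1 with hR
  have hR1 : (1:ℝ) ≤ R := by simp [hR]
  have hR0 : (0:ℝ) < R := by linarith
  have hxR : |x| ≤ R := by simp [hR]
  set t : Set ℝ := Set.Ioo (-R) R with ht
  have hxt : x ∈ t := by
    constructor <;> [nlinarith [abs_nonneg x, neg_abs_le x]; nlinarith [le_abs_self x]]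
  have htop : IsOpen t := isOpen_Ioo
  have htpre : IsPreconnected t := isPreconnected_Ioo
  set g : ℕ → ℝ → ℝ := fun j y => y ^ j / (Nat.factorial j : ℝ) * psi (j + m) with hg_def
  set g' : ℕ → ℝ → ℝ :=
    fun j y => (j : ℝ) * y ^ (j - 1) / (Nat.factorial j : ℝ) * psi (j + m) with hg'_def
  set u : ℕ → ℝ := fun j => ((j:ℝ) * R ^ (j - 1) / (Nat.factorial j : ℝ)) * (C + 1 / m * j)
    with hu_def
  have hpsib : ∀ j : ℕ, |psi ((j:ℝ) + m)| ≤ C + 1 / m * j := by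
    intro j
    have := psi_bound' m hm psi (fun y hy => psi_rec hy) j
    calc |psi ((j:ℝ) + m)| ≤ C + (j:ℝ) / m := this
      _ = C + 1 / m * j := by ring
  have hu : Summable u := by
    rw [← summable_nat_add_iff 1]
    have : (fun j : ℕ => u (j + 1))
        = fun j : ℕ => ((C + 1/m) + (1/m) * j) * R ^ j / (Nat.factorial j : ℝ) := by
      funext j
      simp only [hu_def, Nat.add_sub_cancel, Nat.factorial_succ]
      push_cast
      have h1 : ((j:ℝ) + 1) ≠ 0 := by positivity
      have h2 : (Nat.factorial j : ℝ) ≠ 0 := by positivity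
      field_simp
      try ring
    rw [this]
    exact summable_affine _ _ _
  have hgd : ∀ j : ℕ, ∀ y : ℝ, y ∈ t → HasDerivAt (g j) (g' j y) y := by
    intro j y _
    exact ((hasDerivAt_pow j y).div_const _).mul_const _
  have hg'b : ∀ j : ℕ, ∀ y : ℝ, y ∈ t → ‖g' j y‖ ≤ u j := by
    intro j y hy
    have hyR : |y| ≤ R := by
      rw [abs_le]; exact ⟨hy.1.le, hy.2.le⟩
    have : ‖g' j y‖ = (j:ℝ) * |y| ^ (j-1) / (Nat.factorial j : ℝ) * |psi ((j:ℝ) + m)| := by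
      simp [hg'_def, abs_mul, abs_div, abs_pow, Nat.abs_cast]
    rw [this]; simp only [hu_def]
    gcongr
    exact hpsib j
  have hgsum : ∀ y : ℝ, |y| ≤ R → Summable (fun j => g j y) := by
    intro y hyR
    apply Summable.of_norm_bounded (summable_affine C (1/m) R)
    intro j
    have : ‖g j y‖ = |y| ^ j / (Nat.factorial j : ℝ) * |psi ((j:ℝ) + m)| := by
      simp [hg_def, abs_mul, abs_div, abs_pow]
    rw [this]
    calc |y| ^ j / (Nat.factorial j : ℝ) * |psi ((j:ℝ) + m)|
        ≤ R ^ j / (Nat.factorial j : ℝ) * (C + 1/m * j) := by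
          gcongr
          exact hpsib j
      _ = (C + 1/m * j) * R ^ j / (Nat.factorial j : ℝ) := by ring
  have hS : HasDerivAt (fun z => ∑' j, g j z) (∑' j, g' j x) x :=
    hasDerivAt_tsum_of_isPreconnected hu htop htpre hgd hg'b hxt (hgsum x hxR) hxt
  have hexp : HasDerivAt (fun y : ℝ => Real.exp (-y)) (-Real.exp (-x)) x := by
    have := (Real.hasDerivAt_exp (-x)).comp x ((hasDerivAt_id x).neg)
    simpa [Function.comp_def] using this
  have hphi : HasDerivAt (phi m)
      (-Real.exp (-x) * (∑' j, g j x) + Real.exp (-x) * (∑' j, g' j x)) x := by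
    have := hexp.mul hS
    exact this
  have hderiv := hphi.deriv
  -- compute ∑' j, g' j x
  have hg'x_sum : Summable (fun j => g' j x) :=
    Summable.of_norm_bounded hu (fun j => hg'b j x hxt)
  have hT : Summable (fun j : ℕ => x ^ j / (Nat.factorial j : ℝ) * (1 / ((j:ℝ) + m))) := by
    apply Summable.of_norm_bounded ((Real.summable_pow_div_factorial R).mul_left (1/m))
    intro j
    have hjm : (0:ℝ) < (j:ℝ) + m := by positivity
    have : ‖x ^ j / (Nat.factorial j : ℝ) * (1 / ((j:ℝ) + m))‖
        = |x| ^ j / (Nat.factorial j : ℝ) * (1 / ((j:ℝ) + m)) := by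
      simp [Real.norm_eq_abs, abs_mul, abs_div, abs_pow, abs_of_pos hjm]
    rw [this]
    calc |x| ^ j / (Nat.factorial j : ℝ) * (1 / ((j:ℝ) + m))
        ≤ R ^ j / (Nat.factorial j : ℝ) * (1 / m) := by
          gcongr
          linarith [Nat.cast_nonneg (α := ℝ) j]
      _ = 1 / m * (R ^ j / (Nat.factorial j : ℝ)) := by ring
  have hshift : ∀ j : ℕ, g' (j + 1) x
      = g j x + x ^ j / (Nat.factorial j : ℝ) * (1 / ((j:ℝ) + m)) := by
    intro j
    have hjm : (0:ℝ) < (j:ℝ) + m := by positivity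
    have hrec : psi (((j:ℝ) + m) + 1) = psi ((j:ℝ) + m) + 1 / ((j:ℝ) + m) := psi_rec hjm
    have harg : ((j:ℕ)+1 : ℕ) + m = ((j:ℝ) + m) + 1 := by push_cast; ring
    simp only [hg'_def, hg_def, Nat.add_sub_cancel, Nat.factorial_succ]
    rw [show (((j:ℕ)+1 : ℕ) : ℝ) + m = ((j:ℝ) + m) + 1 by push_cast; ring, hrec]
    push_cast
    have h1 : ((j:ℝ) + 1) ≠ 0 := by positivity
    have h2 : (Nat.factorial j : ℝ) ≠ 0 := by positivity
    field_simp
  have hDsum : (∑' j, g' j x) = (∑' j, g j x)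
      + ∑' j : ℕ, x ^ j / (Nat.factorial j : ℝ) * (1 / ((j:ℝ) + m)) := by
    rw [Summable.tsum_eq_zero_add hg'x_sum]
    have h0 : g' 0 x = 0 := by simp [hg'_def]
    rw [h0, zero_add]
    calc (∑' j : ℕ, g' (j + 1) x)
        = ∑' j : ℕ, (g j x + x ^ j / (Nat.factorial j : ℝ) * (1 / ((j:ℝ) + m))) := by
          exact tsum_congr hshift
      _ = (∑' j, g j x) + ∑' j : ℕ, x ^ j / (Nat.factorial j : ℝ) * (1 / ((j:ℝ) + m)) :=
          Summable.tsum_add (hgsum x hxR) hT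
  have hmain : deriv (phi m) x
      = Real.exp (-x) * ∑' j : ℕ, x ^ j / ((Nat.factorial j : ℝ) * (m + (j:ℝ))) := by
    rw [hderiv, hDsum]
    have : ∀ j : ℕ, x ^ j / (Nat.factorial j : ℝ) * (1 / ((j:ℝ) + m))
        = x ^ j / ((Nat.factorial j : ℝ) * (m + (j:ℝ))) := by
      intro j
      rw [mul_one_div, div_div, add_comm ((j:ℝ)) m]
    rw [tsum_congr this]
    ring
  refine ⟨hmain, ?_⟩
  rw [hmain, ← tsum_mul_left]
  apply tsum_congr
  intro j
  have hjm : (0:ℝ) < m + (j:ℝ) := by positivity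
  have h2 : (Nat.factorial j : ℝ) ≠ 0 := by positivity
  unfold poissonPMFReal
  push_cast
  field_simp
  rfl
end

section
/- The map A ↦ |A| sending a real m×n matrix to its absolute value |A| = (AᵀA)^{1/2} (the unique positive semidefinite symmetric square root of AᵀA) is Lipschitz with constant √2 with respect to the Frobenius norm: ‖|A| − |B|‖_F ≤ √2 ‖A − B‖_F for all real m×n matrices A, B. -/
open Matrix Real

/-- The absolute value |A| = (AᵀA)^{1/2} of a real rectangular matrix: the unique
positive semidefinite symmetric square root of AᵀA. -/
noncomputable def matAbs {m n : ℕ} (A : Matrix (Fin m) (Fin n) ℝ) : Matrix (Fin n) (Fin n) ℝ :=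
  (Matrix.posSemidef_conjTranspose_mul_self A).1.eigenvectorUnitary.1 *
    diagonal ((↑) ∘ (√·) ∘ (Matrix.posSemidef_conjTranspose_mul_self A).1.eigenvalues) *
    (star (Matrix.posSemidef_conjTranspose_mul_self A).1.eigenvectorUnitary : Matrix (Fin n) (Fin n) ℝ)

/-- The Frobenius norm of a real matrix. -/
noncomputable def frob {m n : ℕ} (A : Matrix (Fin m) (Fin n) ℝ) : ℝ :=
  Real.sqrt (∑ i, ∑ j, (A i j) ^ 2)

section psdSqrtSec
open scoped MatrixOrder
variable {k : Type*} [Fintype k] [DecidableEq k]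

noncomputable def psdSqrt {P : Matrix k k ℝ} (_hP : P.PosSemidef) : Matrix k k ℝ := CFC.sqrt P

lemma psdSqrt_posSemidef {P : Matrix k k ℝ} (hP : P.PosSemidef) : (psdSqrt hP).PosSemidef :=
  (CFC.sqrt_nonneg P).posSemidef

lemma psdSqrt_mul_self {P : Matrix k k ℝ} (hP : P.PosSemidef) : psdSqrt hP * psdSqrt hP = P :=
  CFC.sqrt_mul_sqrt_self P hP.nonneg

lemma psd_eq_of_sq_eq_sq {P Q : Matrix k k ℝ} (hP : P.PosSemidef) (hQ : Q.PosSemidef)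
    (h : P ^ 2 = Q ^ 2) : P = Q := by
  rw [← CFC.sqrt_sq P hP.nonneg, h, CFC.sqrt_sq Q hQ.nonneg]

end psdSqrtSec

section aux
variable {k : Type*} [Fintype k] [DecidableEq k]

omit [DecidableEq k] in
lemma trace_conj_self_nonneg (M : Matrix k k ℝ) : 0 ≤ (Mᴴ * M).trace := by
  have : (Mᴴ * M).trace = ∑ j, ∑ i, (M i j)^2 := by
    simp [Matrix.trace, Matrix.mul_apply, Matrix.diag, sq, Matrix.conjTranspose_apply]
  rw [this]
  positivity

lemma trace_psd_mul_nonneg {P Q : Matrix k k ℝ} (hP : P.PosSemidef) (hQ : Q.PosSemidef) :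
    0 ≤ (P * Q).trace := by
  set p := (psdSqrt hP) with hpdef
  set q := (psdSqrt hQ) with hqdef
  have hp : p * p = P := (psdSqrt_mul_self hP)
  have hq : q * q = Q := (psdSqrt_mul_self hQ)
  have h1 : (P * Q).trace = ((q * p)ᴴ * (q * p)).trace := by
    rw [conjTranspose_mul, (psdSqrt_posSemidef hP).1.eq, (psdSqrt_posSemidef hQ).1.eq,
      show p * q * (q * p) = p * (q * q) * p by noncomm_ring,
      hq, Matrix.trace_mul_cycle, hp]
  rw [h1]
  exact trace_conj_self_nonneg _

/-- |H| for a symmetric matrix, via the spectral theorem. -/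
noncomputable def aAbs {H : Matrix k k ℝ} (hH : H.IsHermitian) : Matrix k k ℝ :=
  (hH.eigenvectorUnitary : Matrix k k ℝ) * diagonal (fun i => |hH.eigenvalues i|) *
    star (hH.eigenvectorUnitary : Matrix k k ℝ)

lemma conj_psd {U : Matrix k k ℝ} (d : k → ℝ) (hd : ∀ i, 0 ≤ d i) :
    (U * diagonal d * star U).PosSemidef :=
  (posSemidef_diagonal_iff.mpr hd).mul_mul_conjTranspose_same U

lemma conj_add (U : Matrix k k ℝ) (d e : k → ℝ) :
    U * diagonal d * star U + U * diagonal e * star U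
      = U * diagonal (fun i => d i + e i) * star U := by
  rw [← diagonal_add, mul_add, add_mul]

lemma conj_sub (U : Matrix k k ℝ) (d e : k → ℝ) :
    U * diagonal d * star U - U * diagonal e * star U
      = U * diagonal (fun i => d i - e i) * star U := by
  rw [← diagonal_sub, mul_sub, sub_mul]

lemma spectral' {H : Matrix k k ℝ} (hH : H.IsHermitian) :
    H = (hH.eigenvectorUnitary : Matrix k k ℝ) * diagonal hH.eigenvalues *
      star (hH.eigenvectorUnitary : Matrix k k ℝ) := by
  have := hH.spectral_theorem
  rwa [RCLike.ofReal_real_eq_id, Function.id_comp] at this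

lemma aAbs_posSemidef {H : Matrix k k ℝ} (hH : H.IsHermitian) : (aAbs hH).PosSemidef :=
  conj_psd _ (fun _ => abs_nonneg _)

lemma conj_mul_conj {H : Matrix k k ℝ} (hH : H.IsHermitian) (d e : k → ℝ) :
    ((hH.eigenvectorUnitary : Matrix k k ℝ) * diagonal d * star (hH.eigenvectorUnitary : Matrix k k ℝ)) *
    ((hH.eigenvectorUnitary : Matrix k k ℝ) * diagonal e * star (hH.eigenvectorUnitary : Matrix k k ℝ))
      = (hH.eigenvectorUnitary : Matrix k k ℝ) * diagonal (fun i => d i * e i) *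
        star (hH.eigenvectorUnitary : Matrix k k ℝ) := by
  set U := (hH.eigenvectorUnitary : Matrix k k ℝ)
  have hU : star U * U = 1 := mem_unitaryGroup_iff'.mp hH.eigenvectorUnitary.2
  calc U * diagonal d * star U * (U * diagonal e * star U)
      = U * diagonal d * (star U * U) * diagonal e * star U := by noncomm_ring
    _ = U * (diagonal d * diagonal e) * star U := by rw [hU]; noncomm_ring
    _ = U * diagonal (fun i => d i * e i) * star U := by rw [diagonal_mul_diagonal]

lemma aAbs_mul_aAbs {H : Matrix k k ℝ} (hH : H.IsHermitian) : aAbs hH * aAbs hH = H * H := by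
  calc aAbs hH * aAbs hH
      = (hH.eigenvectorUnitary : Matrix k k ℝ) *
          diagonal (fun i => |hH.eigenvalues i| * |hH.eigenvalues i|) *
          star (hH.eigenvectorUnitary : Matrix k k ℝ) := by
        rw [aAbs]; exact conj_mul_conj hH _ _
    _ = (hH.eigenvectorUnitary : Matrix k k ℝ) *
          diagonal (fun i => hH.eigenvalues i * hH.eigenvalues i) *
          star (hH.eigenvectorUnitary : Matrix k k ℝ) := by
        rw [show (fun i => |hH.eigenvalues i| * |hH.eigenvalues i|)
            = fun i => hH.eigenvalues i * hH.eigenvalues i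
          from funext fun i => abs_mul_abs_self _]
    _ = H * H := by rw [← conj_mul_conj hH, ← spectral' hH]

lemma aAbs_add_posSemidef {H : Matrix k k ℝ} (hH : H.IsHermitian) : (aAbs hH + H).PosSemidef := by
  have key : aAbs hH + H = (hH.eigenvectorUnitary : Matrix k k ℝ) *
      diagonal (fun i => |hH.eigenvalues i| + hH.eigenvalues i) *
      star (hH.eigenvectorUnitary : Matrix k k ℝ) := by
    calc aAbs hH + H
        = (hH.eigenvectorUnitary : Matrix k k ℝ) * diagonal (fun i => |hH.eigenvalues i|) *
            star (hH.eigenvectorUnitary : Matrix k k ℝ) +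
          (hH.eigenvectorUnitary : Matrix k k ℝ) * diagonal hH.eigenvalues *
            star (hH.eigenvectorUnitary : Matrix k k ℝ) := by rw [aAbs, ← spectral' hH]
      _ = _ := conj_add _ _ _
  rw [key]
  exact conj_psd _ (fun i => by linarith [neg_abs_le (hH.eigenvalues i)])

lemma aAbs_sub_posSemidef {H : Matrix k k ℝ} (hH : H.IsHermitian) : (aAbs hH - H).PosSemidef := by
  have key : aAbs hH - H = (hH.eigenvectorUnitary : Matrix k k ℝ) *
      diagonal (fun i => |hH.eigenvalues i| - hH.eigenvalues i) *
      star (hH.eigenvectorUnitary : Matrix k k ℝ) := by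
    calc aAbs hH - H
        = (hH.eigenvectorUnitary : Matrix k k ℝ) * diagonal (fun i => |hH.eigenvalues i|) *
            star (hH.eigenvectorUnitary : Matrix k k ℝ) -
          (hH.eigenvectorUnitary : Matrix k k ℝ) * diagonal hH.eigenvalues *
            star (hH.eigenvectorUnitary : Matrix k k ℝ) := by rw [aAbs, ← spectral' hH]
      _ = _ := conj_sub _ _ _
  rw [key]
  exact conj_psd _ (fun i => by linarith [le_abs_self (hH.eigenvalues i)])

lemma trace_mul_le_trace_aAbs {H K : Matrix k k ℝ} (hH : H.IsHermitian) (hK : K.IsHermitian) :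
    (H * K).trace ≤ (aAbs hH * aAbs hK).trace := by
  have t1 := trace_psd_mul_nonneg (aAbs_sub_posSemidef hH) (aAbs_add_posSemidef hK)
  have t2 := trace_psd_mul_nonneg (aAbs_add_posSemidef hH) (aAbs_sub_posSemidef hK)
  have e1 : (aAbs hH - H) * (aAbs hK + K)
      = aAbs hH * aAbs hK + aAbs hH * K - H * aAbs hK - H * K := by noncomm_ring
  have e2 : (aAbs hH + H) * (aAbs hK - K)
      = aAbs hH * aAbs hK - aAbs hH * K + H * aAbs hK - H * K := by noncomm_ring
  rw [e1] at t1
  rw [e2] at t2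
  simp only [Matrix.trace_add, Matrix.trace_sub] at t1 t2
  linarith

end aux

section blocks
variable {a b : Type*} [Fintype a] [Fintype b] [DecidableEq a] [DecidableEq b]

lemma posSemidef_fromBlocks_diag {P : Matrix a a ℝ} {Q : Matrix b b ℝ}
    (hP : P.PosSemidef) (hQ : Q.PosSemidef) : (fromBlocks P 0 0 Q).PosSemidef := by
  have h : fromBlocks P 0 0 Q
      = (fromBlocks (psdSqrt hP) 0 0 (psdSqrt hQ))ᴴ * (fromBlocks (psdSqrt hP) 0 0 (psdSqrt hQ)) := by
    rw [fromBlocks_conjTranspose, fromBlocks_multiply]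
    have h1 : (psdSqrt hP)ᵀ = (psdSqrt hP) := by
      rw [← Matrix.conjTranspose_eq_transpose_of_trivial, (psdSqrt_posSemidef hP).1.eq]
    have h2 : (psdSqrt hQ)ᵀ = (psdSqrt hQ) := by
      rw [← Matrix.conjTranspose_eq_transpose_of_trivial, (psdSqrt_posSemidef hQ).1.eq]
    simp [h1, h2, (psdSqrt_mul_self hP), (psdSqrt_mul_self hQ)]
  rw [h]
  exact posSemidef_conjTranspose_mul_self _

lemma trace_fromBlocks' (A₁ : Matrix a a ℝ) (B₁ : Matrix a b ℝ) (C₁ : Matrix b a ℝ)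
    (D₁ : Matrix b b ℝ) : (fromBlocks A₁ B₁ C₁ D₁).trace = A₁.trace + D₁.trace := by
  simp [Matrix.trace, Matrix.diag, Fintype.sum_sum_type, fromBlocks]

end blocks

section main
variable {m n : ℕ}

lemma frob_eq (M : Matrix (Fin m) (Fin n) ℝ) : frob M = Real.sqrt (Mᴴ * M).trace := by
  rw [frob]
  congr 1
  have : (Mᴴ * M).trace = ∑ j, ∑ i, (M i j)^2 := by
    simp [Matrix.trace, Matrix.mul_apply, Matrix.diag, sq, Matrix.conjTranspose_apply]
  rw [this]
  exact Finset.sum_comm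

lemma matAbs_posSemidef (A : Matrix (Fin m) (Fin n) ℝ) : (matAbs A).PosSemidef :=
  conj_psd _ (fun i => by simp [Real.sqrt_nonneg])

lemma matAbs_mul_self (A : Matrix (Fin m) (Fin n) ℝ) : matAbs A * matAbs A = Aᴴ * A :=
  by
  have hH := posSemidef_conjTranspose_mul_self A
  rw [matAbs, conj_mul_conj hH.1]
  conv_rhs => rw [spectral' hH.1]
  congr 2
  congr 1
  funext i
  simp [Real.mul_self_sqrt (hH.eigenvalues_nonneg i)]
  exact Real.mul_self_sqrt (hH.eigenvalues_nonneg i)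

noncomputable def matAbs' (A : Matrix (Fin m) (Fin n) ℝ) : Matrix (Fin m) (Fin m) ℝ :=
  psdSqrt (posSemidef_self_mul_conjTranspose A)

lemma matAbs'_posSemidef (A : Matrix (Fin m) (Fin n) ℝ) : (matAbs' A).PosSemidef :=
  psdSqrt_posSemidef (posSemidef_self_mul_conjTranspose A)

lemma matAbs'_mul_self (A : Matrix (Fin m) (Fin n) ℝ) : matAbs' A * matAbs' A = A * Aᴴ :=
  psdSqrt_mul_self (posSemidef_self_mul_conjTranspose A)

def big (A : Matrix (Fin m) (Fin n) ℝ) : Matrix (Fin n ⊕ Fin m) (Fin n ⊕ Fin m) ℝ :=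
  fromBlocks 0 Aᴴ A 0

lemma big_herm (A : Matrix (Fin m) (Fin n) ℝ) : (big A).IsHermitian := by
  rw [Matrix.IsHermitian, big, fromBlocks_conjTranspose]
  simp

lemma big_mul_big (A B : Matrix (Fin m) (Fin n) ℝ) :
    big A * big B = fromBlocks (Aᴴ * B) 0 0 (A * Bᴴ) := by
  rw [big, big, fromBlocks_multiply]
  simp

lemma trace_conj_comm (A B : Matrix (Fin m) (Fin n) ℝ) : (A * Bᴴ).trace = (Aᴴ * B).trace := by
  rw [Matrix.trace_mul_comm,
    show Bᴴ * A = (Aᴴ * B)ᴴ by rw [conjTranspose_mul, conjTranspose_conjTranspose],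
    Matrix.trace_conjTranspose]
  simp

end main

section rest
variable {m n : ℕ}

lemma aAbs_big (A : Matrix (Fin m) (Fin n) ℝ) :
    aAbs (big_herm A) = fromBlocks (matAbs A) 0 0 (matAbs' A) := by
  apply psd_eq_of_sq_eq_sq (aAbs_posSemidef _)
    (posSemidef_fromBlocks_diag (matAbs_posSemidef A) (matAbs'_posSemidef A))
  rw [pow_two, pow_two, aAbs_mul_aAbs, big_mul_big, fromBlocks_multiply]
  simp [matAbs_mul_self, matAbs'_mul_self]

theorem stmt14' {m n : ℕ} (A B : Matrix (Fin m) (Fin n) ℝ) :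
    frob (matAbs A - matAbs B) ≤ Real.sqrt 2 * frob (A - B) := by
  have hP2 := matAbs'_posSemidef A
  have hQ2 := matAbs'_posSemidef B
  have hP := matAbs_posSemidef A
  have hQ := matAbs_posSemidef B
  -- key inequality from the Hermitian dilation
  have key := trace_mul_le_trace_aAbs (big_herm A) (big_herm B)
  have keyL : (big A * big B).trace = 2 * (Aᴴ * B).trace := by
    rw [big_mul_big, trace_fromBlocks', trace_conj_comm]; ring
  have keyR : (aAbs (big_herm A) * aAbs (big_herm B)).trace
      = (matAbs A * matAbs B).trace + (matAbs' A * matAbs' B).trace := by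
    rw [aAbs_big, aAbs_big, fromBlocks_multiply, trace_fromBlocks']
    simp
  rw [keyL, keyR] at key
  -- AM-GM for the second pair
  have amgm : 2 * (matAbs' A * matAbs' B).trace ≤ (Aᴴ * A).trace + (Bᴴ * B).trace := by
    have h0 := trace_conj_self_nonneg (matAbs' A - matAbs' B)
    have hexp : (matAbs' A - matAbs' B)ᴴ * (matAbs' A - matAbs' B)
        = matAbs' A * matAbs' A - matAbs' A * matAbs' B
          - matAbs' B * matAbs' A + matAbs' B * matAbs' B := by
      rw [conjTranspose_sub, hP2.1.eq, hQ2.1.eq]; noncomm_ring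
    rw [hexp, matAbs'_mul_self, matAbs'_mul_self] at h0
    simp only [Matrix.trace_add, Matrix.trace_sub] at h0
    have c1 : (matAbs' B * matAbs' A).trace = (matAbs' A * matAbs' B).trace :=
      Matrix.trace_mul_comm _ _
    have c2 : (A * Aᴴ).trace = (Aᴴ * A).trace := Matrix.trace_mul_comm _ _
    have c3 : (B * Bᴴ).trace = (Bᴴ * B).trace := Matrix.trace_mul_comm _ _
    linarith
  -- expansions
  have expD : ((matAbs A - matAbs B)ᴴ * (matAbs A - matAbs B)).trace
      = (Aᴴ * A).trace + (Bᴴ * B).trace - 2 * (matAbs A * matAbs B).trace := by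
    have hexp : (matAbs A - matAbs B)ᴴ * (matAbs A - matAbs B)
        = matAbs A * matAbs A - matAbs A * matAbs B
          - matAbs B * matAbs A + matAbs B * matAbs B := by
      rw [conjTranspose_sub, hP.1.eq, hQ.1.eq]; noncomm_ring
    rw [hexp, matAbs_mul_self, matAbs_mul_self]
    simp only [Matrix.trace_add, Matrix.trace_sub]
    have c1 : (matAbs B * matAbs A).trace = (matAbs A * matAbs B).trace :=
      Matrix.trace_mul_comm _ _
    linarith
  have expX : ((A - B)ᴴ * (A - B)).trace
      = (Aᴴ * A).trace + (Bᴴ * B).trace - 2 * (Aᴴ * B).trace := by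
    have hexp : (A - B)ᴴ * (A - B) = Aᴴ * A - Aᴴ * B - (Bᴴ * A - Bᴴ * B) := by
      rw [conjTranspose_sub, Matrix.sub_mul, Matrix.mul_sub, Matrix.mul_sub]
    rw [hexp]
    simp only [Matrix.trace_add, Matrix.trace_sub]
    have c1 : (Bᴴ * A).trace = (Aᴴ * B).trace := by
      rw [← trace_conj_comm, Matrix.trace_mul_comm]
    linarith
  rw [frob_eq, frob_eq, ← Real.sqrt_mul (by norm_num : (0:ℝ) ≤ 2)]
  exact Real.sqrt_le_sqrt (by rw [expD, expX]; linarith)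

end rest

theorem stmt14 {m n : ℕ} (A B : Matrix (Fin m) (Fin n) ℝ) :
    frob (matAbs A - matAbs B) ≤ Real.sqrt 2 * frob (A - B) := by
  exact stmt14' A B
end
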